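/- Let a_1 ≥ ... ≥ a_m ≥ 0 with m ≥ 1000k and suppose H is a uniformly random subset of [m] of size 2k. Then with probability at least 19/20, Σ_{j ∈ H} a_j ≤ 400·(k/m)·Σ_{j = ⌈m/(100k)⌉}^{m} a_j. -/

import Mathlib

open Finset

lemma cardA {α : Type*} [DecidableEq α] (s : Finset α) (i : α) (hi : i ∈ s) (n : ℕ) :
    ((s.powersetCard (n+1)).filter (fun H => i ∈ H)).card = (s.card - 1).choose n := by
  have h := Finset.powersetCard_succ_insert (Finset.notMem_erase i s) n
  rw [Finset.insert_erase hi] at h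
  rw [h, Finset.filter_union]
  have h1 : ((s.erase i).powersetCard (n+1)).filter (fun H => i ∈ H) = ∅ := by
    rw [Finset.filter_eq_empty_iff]
    intro H hH hiH
    exact Finset.notMem_erase i s ((Finset.mem_powersetCard.1 hH).1 hiH)
  have h2 : (((s.erase i).powersetCard n).image (insert i)).filter (fun H => i ∈ H)
      = ((s.erase i).powersetCard n).image (insert i) := by
    apply Finset.filter_true_of_mem
    intro H hH
    obtain ⟨H', _, rfl⟩ := Finset.mem_image.1 hH
    exact Finset.mem_insert_self i H'
  rw [h1, h2, Finset.empty_union, Finset.card_image_of_injOn, Finset.card_powersetCard,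
    Finset.card_erase_of_mem hi]
  intro H hH H' hH' hins
  have hiH : i ∉ H := fun h => Finset.notMem_erase i s ((Finset.mem_powersetCard.1 hH).1 h)
  have hiH' : i ∉ H' := fun h => Finset.notMem_erase i s ((Finset.mem_powersetCard.1 hH').1 h)
  have := congrArg (Finset.erase · i) hins
  simpa [Finset.erase_insert hiH, Finset.erase_insert hiH'] using this

lemma sumB {α : Type*} [DecidableEq α] (s : Finset α) (n : ℕ) (f : α → ℝ) :
    ∑ H ∈ s.powersetCard (n+1), ∑ j ∈ H, f j
      = ((s.card - 1).choose n : ℝ) * ∑ j ∈ s, f j := by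
  calc ∑ H ∈ s.powersetCard (n+1), ∑ j ∈ H, f j
      = ∑ H ∈ s.powersetCard (n+1), ∑ j ∈ s, if j ∈ H then f j else 0 := by
        refine Finset.sum_congr rfl fun H hH => ?_
        rw [Finset.sum_ite_mem, Finset.inter_eq_right.2 (Finset.mem_powersetCard.1 hH).1]
    _ = ∑ j ∈ s, ∑ H ∈ s.powersetCard (n+1), if j ∈ H then f j else 0 := Finset.sum_comm
    _ = ∑ j ∈ s, (((s.powersetCard (n+1)).filter (fun H => j ∈ H)).card : ℝ) * f j := by
        refine Finset.sum_congr rfl fun j hj => ?_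
        rw [← Finset.sum_filter, Finset.sum_const, nsmul_eq_mul]
    _ = ((s.card - 1).choose n : ℝ) * ∑ j ∈ s, f j := by
        rw [Finset.mul_sum]
        exact Finset.sum_congr rfl fun j hj => by rw [cardA s j hj n]

theorem stmt_10 (k m : ℕ) (hk : 1 ≤ k) (hm : 1000 * k ≤ m)
    (a : Fin m → ℝ) (ha0 : ∀ j, 0 ≤ a j)
    (hmono : ∀ j j' : Fin m, j ≤ j' → a j' ≤ a j) :
    (((Finset.univ.powersetCard (2 * k)).filter (fun H : Finset (Fin m) =>
        ∑ j ∈ H, a j ≤ 400 * ((k : ℝ) / m) *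
          ∑ j' ∈ Finset.univ.filter
            (fun j' : Fin m => (m : ℝ) ≤ ((j' : ℕ) + 1 : ℝ) * (100 * k)), a j')).card : ℝ)
      ≥ (19 / 20) * ((Finset.univ.powersetCard (2 * k) : Finset (Finset (Fin m))).card : ℝ) := by
  have hm0 : 0 < m := by omega
  have hmR : (0:ℝ) < m := by exact_mod_cast hm0
  have h2k1 : 2 * k = (2*k-1) + 1 := by omega
  set T : Finset (Fin m) := Finset.univ.filter
      (fun j' : Fin m => (m : ℝ) ≤ ((j' : ℕ) + 1 : ℝ) * (100 * k)) with hT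
  set P : Finset (Fin m) → Prop := fun H =>
      ∑ j ∈ H, a j ≤ 400 * ((k : ℝ) / m) * ∑ j' ∈ T, a j' with hP
  set N := (Finset.univ.powersetCard (2 * k) : Finset (Finset (Fin m))) with hN
  set S := ∑ j' ∈ T, a j' with hS
  have hS0 : 0 ≤ S := Finset.sum_nonneg fun j _ => ha0 j
  set B : Finset (Fin m) := Finset.univ.filter
      (fun j : Fin m => ¬ ((m : ℝ) ≤ ((j : ℕ) + 1 : ℝ) * (100 * k))) with hB
  -- cardinalities
  have hNcard : N.card = m.choose (2*k) := by
    rw [hN, Finset.card_powersetCard, Finset.card_univ, Fintype.card_fin]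
  have hBT : T.card + B.card = m := by
    rw [hT, hB, Finset.card_filter_add_card_filter_not, Finset.card_univ,
      Fintype.card_fin]
  have hBbound : B.card * (100 * k) < m := by
    have hle : B.card ≤ (m-1) / (100*k) := by
      have := Finset.card_le_card_of_injOn (s := B) (t := Finset.range ((m-1)/(100*k)))
        (fun j : Fin m => (j : ℕ)) ?_ ?_
      · simpa using this
      · intro j hj
        rw [Finset.mem_coe, hB, Finset.mem_filter] at hj
        have h1 : ((j:ℕ) + 1 : ℝ) * (100 * k) < m := not_le.mp hj.2
        have h2 : ((j:ℕ) + 1) * (100 * k) < m := by exact_mod_cast h1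
        simp only [Finset.mem_coe, Finset.mem_range]
        have : (j:ℕ) + 1 ≤ (m-1) / (100*k) := by
          rw [Nat.le_div_iff_mul_le (by positivity)]
          omega
        omega
      · exact fun x _ y _ h => Fin.val_injective h
    calc B.card * (100*k) ≤ ((m-1)/(100*k)) * (100*k) := Nat.mul_le_mul_right _ hle
      _ ≤ m - 1 := Nat.div_mul_le_self _ _
      _ < m := by omega
  have h99 : 99 * m < 100 * T.card := by
    have : B.card * 100 ≤ B.card * (100 * k) := by
      calc B.card * 100 = B.card * 100 * 1 := by ring
        _ ≤ B.card * 100 * k := Nat.mul_le_mul_left _ hk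
        _ = B.card * (100 * k) := by ring
    omega
  have hTpos : 0 < T.card := by omega
  -- choose identities
  have hC1 : m * (m-1).choose (2*k-1) = 2*k * m.choose (2*k) := by
    have h := Nat.add_one_mul_choose_eq (m-1) (2*k-1)
    rw [show m-1+1 = m by omega, show 2*k-1+1 = 2*k by omega] at h
    rw [h]; ring
  have hC2 : T.card * (T.card - 1).choose (2*k-1) = 2*k * T.card.choose (2*k) := by
    have h := Nat.add_one_mul_choose_eq (T.card-1) (2*k-1)
    rw [show T.card-1+1 = T.card by omega, show 2*k-1+1 = 2*k by omega] at h
    rw [h]; ring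
  have hCle : T.card.choose (2*k) ≤ m.choose (2*k) := by
    apply Nat.choose_le_choose; omega
  -- bad sets
  set Bad := N.filter (fun H => ¬ P H) with hBad
  set Bad1 := B.biUnion (fun i => N.filter (fun H => i ∈ H)) with hBad1d
  set Bad2 := (T.powersetCard (2*k)).filter (fun H => ¬ P H) with hBad2d
  have hsplit : (N.filter P).card + Bad.card = N.card :=
    Finset.card_filter_add_card_filter_not _
  have hsub : Bad ⊆ Bad1 ∪ Bad2 := by
    intro H hH
    rw [hBad, Finset.mem_filter] at hH
    obtain ⟨hHN, hHP⟩ := hH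
    by_cases hHT : H ⊆ T
    · refine Finset.mem_union_right _ ?_
      rw [hBad2d, Finset.mem_filter, Finset.mem_powersetCard]
      exact ⟨⟨hHT, (Finset.mem_powersetCard.1 hHN).2⟩, hHP⟩
    · refine Finset.mem_union_left _ ?_
      obtain ⟨i, hiH, hiT⟩ := Finset.not_subset.1 hHT
      refine Finset.mem_biUnion.2 ⟨i, ?_, Finset.mem_filter.2 ⟨hHN, hiH⟩⟩
      rw [hB, Finset.mem_filter]
      rw [hT, Finset.mem_filter] at hiT
      exact ⟨Finset.mem_univ i, fun h => hiT ⟨Finset.mem_univ i, h⟩⟩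
  have hb1 : Bad1.card ≤ B.card * (m-1).choose (2*k-1) := by
    calc Bad1.card ≤ ∑ i ∈ B, (N.filter (fun H => i ∈ H)).card := Finset.card_biUnion_le
      _ = ∑ i ∈ B, (m-1).choose (2*k-1) := by
          refine Finset.sum_congr rfl fun i _ => ?_
          rw [hN, h2k1, cardA Finset.univ i (Finset.mem_univ i) (2*k-1), Finset.card_univ,
            Fintype.card_fin]
          congr 1 <;> omega
      _ = B.card * (m-1).choose (2*k-1) := by rw [Finset.sum_const, smul_eq_mul]
  have r1R : 50 * (Bad1.card : ℝ) ≤ (m.choose (2*k) : ℝ) := by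
    have hb1R : (Bad1.card : ℝ) ≤ (B.card : ℝ) * ((m-1).choose (2*k-1) : ℝ) := by
      exact_mod_cast hb1
    have hC1R : (m:ℝ) * ((m-1).choose (2*k-1) : ℝ) = 2*k * (m.choose (2*k) : ℝ) := by
      exact_mod_cast hC1
    have hBR : (B.card : ℝ) * (100*k) ≤ m := by exact_mod_cast le_of_lt hBbound
    have e : (B.card:ℝ) * ((m:ℝ) * ((m-1).choose (2*k-1):ℝ))
        = (B.card:ℝ) * (2*k * (m.choose (2*k):ℝ)) := by rw [hC1R]
    have hCpos : (0:ℝ) ≤ (m.choose (2*k) : ℝ) := Nat.cast_nonneg _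
    have h2 : ((B.card:ℝ) * (100*k)) * (m.choose (2*k):ℝ) ≤ m * (m.choose (2*k):ℝ) :=
      mul_le_mul_of_nonneg_right hBR hCpos
    have h1 : (Bad1.card : ℝ) * m ≤ (B.card : ℝ) * ((m-1).choose (2*k-1) : ℝ) * m :=
      mul_le_mul_of_nonneg_right hb1R (le_of_lt hmR)
    have : (m:ℝ) * (50 * (Bad1.card:ℝ)) ≤ m * (m.choose (2*k):ℝ) := by nlinarith
    exact le_of_mul_le_mul_left this hmR
  -- Markov for Bad2
  have hb2 : (Bad2.card : ℝ) * (400 * ((k:ℝ)/m) * S) ≤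
      (((T.card - 1).choose (2*k-1) : ℕ) : ℝ) * S := by
    calc (Bad2.card : ℝ) * (400 * ((k:ℝ)/m) * S)
        = ∑ _H ∈ Bad2, 400 * ((k:ℝ)/m) * S := by rw [Finset.sum_const, nsmul_eq_mul]
      _ ≤ ∑ H ∈ Bad2, ∑ j ∈ H, a j := by
          refine Finset.sum_le_sum fun H hH => ?_
          rw [hBad2d, Finset.mem_filter] at hH
          exact le_of_lt (not_le.mp hH.2)
      _ ≤ ∑ H ∈ T.powersetCard (2*k), ∑ j ∈ H, a j := by
          refine Finset.sum_le_sum_of_subset_of_nonneg (Finset.filter_subset _ _)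
            fun H _ _ => Finset.sum_nonneg fun j _ => ha0 j
      _ = (((T.card - 1).choose (2*k-1) : ℕ) : ℝ) * S := by
          rw [h2k1, sumB, ← hS]
          congr 2 <;> omega
  have r2 : (Bad2.card : ℝ) * 198 ≤ (m.choose (2*k) : ℝ) := by
    rcases eq_or_lt_of_le hS0 with hSz | hSp
    · have hBe : Bad2 = ∅ := by
        rw [hBad2d, Finset.filter_eq_empty_iff]
        intro H hH
        rw [not_not]
        show ∑ j ∈ H, a j ≤ 400 * ((k:ℝ)/m) * S
        have hsub' : H ⊆ T := (Finset.mem_powersetCard.1 hH).1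
        have h1 : ∑ j ∈ H, a j ≤ S :=
          Finset.sum_le_sum_of_subset_of_nonneg hsub' fun j _ _ => ha0 j
        have h2 : 400 * ((k:ℝ)/m) * S = 0 := by rw [← hSz]; ring
        linarith
      rw [hBe]
      simp only [Finset.card_empty, Nat.cast_zero, zero_mul]
      positivity
    · -- S > 0 case
      have hkR : (0:ℝ) < k := by exact_mod_cast hk
      have h1' : (Bad2.card : ℝ) * (400 * ((k:ℝ)/m)) * S
          ≤ ((T.card - 1).choose (2*k-1) : ℝ) * S := by rw [mul_assoc]; exact hb2
      have h1 : (Bad2.card : ℝ) * (400 * ((k:ℝ)/m)) ≤ ((T.card - 1).choose (2*k-1) : ℝ) :=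
        le_of_mul_le_mul_right h1' hSp
      have h2 : (Bad2.card : ℝ) * (400 * k) ≤ ((T.card - 1).choose (2*k-1) : ℝ) * m := by
        have h3 := mul_le_mul_of_nonneg_right h1 (le_of_lt hmR)
        calc (Bad2.card : ℝ) * (400 * k) = (Bad2.card : ℝ) * (400 * ((k:ℝ)/m)) * m := by
              rw [mul_assoc, mul_assoc, div_mul_cancel₀ _ (ne_of_gt hmR)]
          _ ≤ _ := h3
      -- now multiply by T.card and use hC2, hCle, h99
      have hC2R : (T.card : ℝ) * ((T.card - 1).choose (2*k-1) : ℝ)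
          = 2*k * (T.card.choose (2*k) : ℝ) := by exact_mod_cast hC2
      have hCleR : (T.card.choose (2*k) : ℝ) ≤ (m.choose (2*k) : ℝ) := by exact_mod_cast hCle
      have h99R : 99 * (m:ℝ) ≤ 100 * T.card := by exact_mod_cast le_of_lt h99
      have hTposR : (0:ℝ) < T.card := by exact_mod_cast hTpos
      nlinarith [mul_le_mul_of_nonneg_left h2 (le_of_lt hTposR),
        mul_le_mul_of_nonneg_left hCleR (by positivity : (0:ℝ) ≤ 2*k*(m:ℝ)),
        mul_le_mul_of_nonneg_left h99R (by positivity : (0:ℝ) ≤ 2*k*(m.choose (2*k):ℝ)),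
        Nat.cast_nonneg (α := ℝ) Bad2.card]
  -- combine
  have hBadle : (Bad.card : ℝ) ≤ (Bad1.card : ℝ) + (Bad2.card : ℝ) := by
    have := le_trans (Finset.card_le_card hsub) (Finset.card_union_le Bad1 Bad2)
    exact_mod_cast this
  have hsplitR : ((N.filter P).card : ℝ) + (Bad.card : ℝ) = (N.card : ℝ) := by
    exact_mod_cast hsplit
  have hNR : (N.card : ℝ) = (m.choose (2*k) : ℝ) := by exact_mod_cast hNcard
  have : ((N.filter P).card : ℝ) ≥ 19/20 * (N.card : ℝ) := by
    rw [hNR] at hsplitR ⊢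
    linarith
  exact this
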